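/- Let R be a regular S-graded ring. Then every homogeneous element of the classical Brown–McCoy radical G(R) of R belongs to the graded Brown–McCoy radical 𝒢(R); equivalently, the largest homogeneous ideal of R contained in G(R) is contained in 𝒢(R). -/
import Mathlib


/-!
Common framework: S-graded rings (rings that are direct sums of additive
subgroups indexed by a set S, with homogeneous products homogeneous),
homogeneous ideals, graded modules, and the various Brown--McCoy radicals.
-/

universe u v w

/-- An `S`-graded ring structure on a (not necessarily unital or commutative)
associative ring `R`: a family of additive subgroups indexed by a nonempty set `S`
whose internal direct sum is `R`, such that whenever `R_s · R_t ≠ 0` there is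
`u ∈ S` with `R_s · R_t ⊆ R_u`. -/
structure SGraded (S : Type v) (R : Type w) [NonUnitalRing R] where
  component : S → AddSubgroup R
  nonemptyS : Nonempty S
  independent : iSupIndep component
  iSup_eq_top : (⨆ s, component s) = ⊤
  mul_cond : ∀ s t : S, (∃ a ∈ component s, ∃ b ∈ component t, a * b ≠ 0) →
    ∃ u : S, ∀ a ∈ component s, ∀ b ∈ component t, a * b ∈ component u

namespace SGraded

variable {S : Type v} {R : Type w} [NonUnitalRing R] (G : SGraded S R)

/-- A homogeneous element. -/
def Homog (a : R) : Prop := ∃ s, a ∈ G.component s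

/-- The homogeneous part `A = ⋃ s, R_s` of `R`. -/
def homogPart : Set R := {a : R | G.Homog a}

/-- Two homogeneous elements are addable if one is `0` or they have the same degree. -/
def Addable (a b : R) : Prop := a = 0 ∨ b = 0 ∨ ∃ s, a ∈ G.component s ∧ b ∈ G.component s

/-- `ε ∈ S` is idempotent: `R_ε · R_ε ≠ 0` and `R_ε · R_ε ⊆ R_ε`. -/
def IsIdem (ε : S) : Prop :=
  (∃ a ∈ G.component ε, ∃ b ∈ G.component ε, a * b ≠ 0) ∧
  ∀ a ∈ G.component ε, ∀ b ∈ G.component ε, a * b ∈ G.component ε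

/-- Condition (Δ): the product of two nonidempotent degrees is never idempotent. -/
def CondDelta : Prop := ∀ s t u : S,
  (∃ a ∈ G.component s, ∃ b ∈ G.component t, a * b ≠ 0) →
  (∀ a ∈ G.component s, ∀ b ∈ G.component t, a * b ∈ G.component u) →
  ¬ G.IsIdem s → ¬ G.IsIdem t → ¬ G.IsIdem u

/-- Regularity (cancellativity) of the grading. -/
def Regular : Prop := ∀ a b c : R, G.Homog a → G.Homog b → G.Homog c →
  a ≠ 0 → b ≠ 0 → c ≠ 0 →
  ((a * c ≠ 0 → b * c ≠ 0 → G.Addable (a * c) (b * c) → G.Addable a b) ∧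
   (c * a ≠ 0 → c * b ≠ 0 → G.Addable (c * a) (c * b) → G.Addable a b))

end SGraded

section Rings

variable {R : Type w} [NonUnitalRing R]

/-- A right ideal of `R`, as an additive subgroup. -/
def IsRightIdeal (I : AddSubgroup R) : Prop := ∀ x ∈ I, ∀ r : R, x * r ∈ I

/-- A two-sided ideal of `R`, as an additive subgroup. -/
def IsTwoSidedIdeal' (I : AddSubgroup R) : Prop := ∀ x ∈ I, ∀ r : R, x * r ∈ I ∧ r * x ∈ I

/-- The right ideal of `R` generated by a set. -/
def rightIdealGen (T : Set R) : AddSubgroup R :=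
  sInf {I : AddSubgroup R | T ⊆ I ∧ IsRightIdeal I}

/-- A right ideal of the (sub)ring `E`, as an additive subgroup of `R` contained in `E`. -/
def IsRightIdealOn (E I : AddSubgroup R) : Prop := I ≤ E ∧ ∀ x ∈ I, ∀ r ∈ E, x * r ∈ I

/-- A two-sided ideal of the (sub)ring `E`. -/
def IsIdealOn (E I : AddSubgroup R) : Prop :=
  I ≤ E ∧ ∀ x ∈ I, ∀ r ∈ E, x * r ∈ I ∧ r * x ∈ I

/-- The largest two-sided ideal of the (sub)ring `E` contained in `J`. -/
def coreOn (E J : AddSubgroup R) : AddSubgroup R :=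
  sSup {K : AddSubgroup R | IsIdealOn E K ∧ K ≤ J}

/-- A maximal right ideal of the (sub)ring `E`. -/
def IsMaxRightIdealOn (E J : AddSubgroup R) : Prop :=
  IsRightIdealOn E J ∧ J ≠ E ∧ ∀ K : AddSubgroup R, IsRightIdealOn E K → J < K → K ≤ E → K = E

/-- A modular two-sided ideal of the (sub)ring `E`:
there is `e ∈ E` with `ea - a ∈ J` and `ae - a ∈ J` for all `a ∈ E`. -/
def IsModularIdealOn (E J : AddSubgroup R) : Prop :=
  ∃ e ∈ E, ∀ a ∈ E, e * a - a ∈ J ∧ a * e - a ∈ J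

/-- The classical Brown--McCoy radical of the (sub)ring `E`: the intersection of all
two-sided ideals `I` of `E` such that `E/I` is a simple ring with identity. -/
def brownMcCoyOn (E : AddSubgroup R) : Set R :=
  {a : R | a ∈ E ∧ ∀ I : AddSubgroup R, IsIdealOn E I → I ≠ E →
    IsModularIdealOn E I →
    (∀ K : AddSubgroup R, IsIdealOn E K → I ≤ K → K ≤ E → K = I ∨ K = E) → a ∈ I}

/-- `e` is a unity modulo `I`. -/
def IsUnityMod (e : R) (I : AddSubgroup R) : Prop := ∀ a : R, e * a - a ∈ I ∧ a * e - a ∈ I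

/-- `x` is a G-regular element of the (sub)ring `E`: there is no proper two-sided
ideal `I` of `E` such that `x` is a unity modulo `I`. -/
def GRegularOn (E : AddSubgroup R) (x : R) : Prop :=
  ∀ I : AddSubgroup R, IsIdealOn E I → I ≠ E →
    ¬ (∀ a ∈ E, x * a - a ∈ I ∧ a * x - a ∈ I)

end Rings

namespace SGraded

variable {S : Type v} {R : Type w} [NonUnitalRing R] (G : SGraded S R)

/-- An additive subgroup generated (as an additive group) by its homogeneous elements. -/
def IsHomSubgroup (I : AddSubgroup R) : Prop :=
  I = AddSubgroup.closure {a : R | a ∈ I ∧ G.Homog a}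

/-- A homogeneous right ideal of `R`. -/
def IsHomRightIdeal (I : AddSubgroup R) : Prop := IsRightIdeal I ∧ G.IsHomSubgroup I

/-- A homogeneous (two-sided) ideal of `R`. -/
def IsHomIdeal (I : AddSubgroup R) : Prop := IsTwoSidedIdeal' I ∧ G.IsHomSubgroup I

/-- `Ǐ`: the largest homogeneous ideal of `R` contained in `I`. -/
def core (I : AddSubgroup R) : AddSubgroup R :=
  sSup {J : AddSubgroup R | G.IsHomIdeal J ∧ J ≤ I}

/-- A homogeneous right ideal, maximal among the proper homogeneous right ideals of `R`. -/
def IsMaxHomRightIdeal (I : AddSubgroup R) : Prop :=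
  G.IsHomRightIdeal I ∧ I ≠ ⊤ ∧ ∀ K : AddSubgroup R, G.IsHomRightIdeal K → I < K → K = ⊤

/-- A modular homogeneous ideal of `R`: a homogeneous ideal admitting a homogeneous
unity modulo it. -/
def IsModularHomIdeal (I : AddSubgroup R) : Prop :=
  G.IsHomIdeal I ∧ ∃ e, G.Homog e ∧ IsUnityMod e I

/-- A homogeneous element is G-regular if it is a unity modulo no proper homogeneous
ideal of `R`. -/
def GRegular (x : R) : Prop :=
  ∀ I : AddSubgroup R, G.IsHomIdeal I → I ≠ ⊤ → ¬ IsUnityMod x I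

/-- The quotient graded ring `R/J` (graded by the images of the components) is a
regular simple graded ring whose identity is the image of a homogeneous element:
`R/J` is nonzero, regular, has an identity which is the image of a homogeneous
element of `R`, and has no homogeneous ideals other than `0` and `R/J`. -/
def QuotInM (J : AddSubgroup R) : Prop :=
  J ≠ ⊤ ∧
  (∃ e, G.Homog e ∧ IsUnityMod e J) ∧
  (∀ K : AddSubgroup R, G.IsHomIdeal K → J ≤ K → K = J ∨ K = ⊤) ∧
  (∀ a b c : R, G.Homog a → G.Homog b → G.Homog c → a ∉ J → b ∉ J → c ∉ J →
    ((a * c ∉ J → b * c ∉ J → G.Addable (a * c) (b * c) → G.Addable a b) ∧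
     (c * a ∉ J → c * b ∉ J → G.Addable (c * a) (c * b) → G.Addable a b)))

/-- The graded Brown--McCoy radical `𝒢(R)`: the intersection of all homogeneous right
ideals `I`, maximal among the proper homogeneous right ideals, such that `R/Ǐ` is a
regular simple graded ring with identity the image of a homogeneous element. -/
def gradedBM : Set R :=
  {a : R | ∀ I : AddSubgroup R, G.IsMaxHomRightIdeal I → G.QuotInM (G.core I) → a ∈ I}

/-- The quotient right `R`-module `R/J` (graded by the images of the components) is a
graded-simple graded right `R`-module, phrased inside `R`. -/
def QuotGradedSimple (J : AddSubgroup R) : Prop :=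
  (∃ x a : R, G.Homog x ∧ G.Homog a ∧ x * a ∉ J) ∧
  (∀ K : AddSubgroup R, G.IsHomRightIdeal K → J ≤ K → K = J ∨ K = ⊤) ∧
  (∀ I : AddSubgroup R, G.IsHomIdeal I → (∃ r : R, ∃ b ∈ I, r * b ∉ J) →
    ∃ b ∈ I, ∀ x : R, G.Homog x → x * b - x ∈ J)

end SGraded

/-- A graded right module over an `S`-graded ring `R`: a right `R`-module structure on
an additive commutative group `M` together with a family of additive subgroups indexed
by a nonempty set `D` whose internal direct sum is `M` and with `M_d · R_s ⊆ M_t`. -/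
structure GradedRightModule {S : Type v} {R : Type w} [NonUnitalRing R]
    (G : SGraded S R) (M : Type u) [AddCommGroup M] where
  smul : M → R → M
  add_smul : ∀ (x y : M) (a : R), smul (x + y) a = smul x a + smul y a
  smul_add : ∀ (x : M) (a b : R), smul x (a + b) = smul x a + smul x b
  smul_mul : ∀ (x : M) (a b : R), smul x (a * b) = smul (smul x a) b
  D : Type u
  nonemptyD : Nonempty D
  mcomp : D → AddSubgroup M
  mindependent : iSupIndep mcomp
  miSup_eq_top : (⨆ d, mcomp d) = ⊤
  graded : ∀ (d : D) (s : S), ∃ t : D, ∀ x ∈ mcomp d, ∀ r ∈ G.component s, smul x r ∈ mcomp t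

namespace GradedRightModule

variable {S : Type v} {R : Type w} [NonUnitalRing R] {G : SGraded S R}
  {M : Type u} [AddCommGroup M] (gm : GradedRightModule G M)

/-- A homogeneous element of `M`. -/
def HomogM (x : M) : Prop := ∃ d, x ∈ gm.mcomp d

/-- Addability of homogeneous elements of `M`. -/
def AddableM (x y : M) : Prop := x = 0 ∨ y = 0 ∨ ∃ d, x ∈ gm.mcomp d ∧ y ∈ gm.mcomp d

/-- A homogeneous submodule of `M`: a submodule generated (as an additive group)
by its homogeneous elements. -/
def IsHomSubmodule (N : AddSubgroup M) : Prop :=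
  (∀ x ∈ N, ∀ r : R, gm.smul x r ∈ N) ∧
  N = AddSubgroup.closure {x : M | x ∈ N ∧ gm.HomogM x}

/-- `M` is graded-irreducible. -/
def GradedIrreducible : Prop :=
  (∃ (x : M) (a : R), gm.HomogM x ∧ G.Homog a ∧ gm.smul x a ≠ 0) ∧
  ∀ N : AddSubgroup M, gm.IsHomSubmodule N → N = ⊥ ∨ N = ⊤

/-- `M` is graded-simple: graded-irreducible and for every homogeneous ideal `I` of `R`
with `M·I ≠ 0` there is `b ∈ I` acting as identity on all homogeneous elements of `M`. -/
def GradedSimple : Prop :=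
  gm.GradedIrreducible ∧
  ∀ I : AddSubgroup R, G.IsHomIdeal I → (∃ x : M, ∃ b ∈ I, gm.smul x b ≠ 0) →
    ∃ b ∈ I, ∀ x : M, gm.HomogM x → gm.smul x b = x

/-- `M` is a regular graded module. -/
def ModRegular : Prop :=
  ∀ (x : M) (a b : R), gm.HomogM x → G.Homog a → G.Homog b →
    gm.smul x a ≠ 0 → gm.smul x b ≠ 0 →
    gm.AddableM (gm.smul x a) (gm.smul x b) → G.Addable a b

end GradedRightModule

/-- The large graded Brown--McCoy radical `G_l(R)`: the homogeneous elements
annihilating every graded-simple graded right `R`-module. -/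
def largeGradedBM {S : Type v} {R : Type w} [NonUnitalRing R] (G : SGraded S R) : Set R :=
  {a : R | G.Homog a ∧ ∀ (M : Type u) [AddCommGroup M] (gm : GradedRightModule G M),
    gm.GradedSimple → ∀ x : M, gm.smul x a = 0}


/-- Auxiliary: the additive subgroup of `r` with `x*r ∈ P` and `r*x ∈ P`. -/
def mulMemSub {R : Type w} [NonUnitalRing R] (P : AddSubgroup R) (x : R) : AddSubgroup R where
  carrier := {r | x * r ∈ P ∧ r * x ∈ P}
  zero_mem' := ⟨by rw [mul_zero]; exact P.zero_mem, by rw [zero_mul]; exact P.zero_mem⟩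
  add_mem' := fun ha hb => ⟨by rw [mul_add]; exact P.add_mem ha.1 hb.1,
    by rw [add_mul]; exact P.add_mem ha.2 hb.2⟩
  neg_mem' := fun ha => ⟨by rw [mul_neg]; exact P.neg_mem ha.1,
    by rw [neg_mul]; exact P.neg_mem ha.2⟩

lemma mem_mulMemSub {R : Type w} [NonUnitalRing R] {P : AddSubgroup R} {x r : R} :
    r ∈ mulMemSub P x ↔ x * r ∈ P ∧ r * x ∈ P := Iff.rfl

variable {S : Type v} {R : Type w} [NonUnitalRing R]

/-- For a regular `S`-graded ring `R`, every homogeneous element of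
the classical Brown--McCoy radical `G(R)` belongs to the graded Brown--McCoy radical
`𝒢(R)`. -/
theorem brownMcCoy_homog_subset_gradedBM (G : SGraded S R) (hreg : G.Regular) :
    brownMcCoyOn (⊤ : AddSubgroup R) ∩ G.homogPart ⊆ G.gradedBM := by
  rintro a ⟨haBM, haHom⟩ I hI hQ
  set C : AddSubgroup R := G.core I with hC
  obtain ⟨hCne, ⟨e, heHom, heU⟩, hsimp, _⟩ := hQ
  -- C ≤ I
  have hCle : C ≤ I := sSup_le (fun J hJ => hJ.2)
  -- C is a two-sided ideal
  have hCideal : IsTwoSidedIdeal' C := by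
    intro x hx r
    have : C ≤ mulMemSub C r := by
      refine sSup_le (fun J hJ => ?_)
      intro y hy
      exact ⟨(le_sSup hJ) (hJ.1.1 y hy r).2, (le_sSup hJ) (hJ.1.1 y hy r).1⟩
    exact ⟨(this hx).2, (this hx).1⟩
  -- C is a homogeneous subgroup
  have hCHomSub : G.IsHomSubgroup C := by
    apply le_antisymm
    · refine sSup_le (fun J hJ => ?_)
      have := hJ.1.2
      calc J = AddSubgroup.closure {x | x ∈ J ∧ G.Homog x} := this
        _ ≤ AddSubgroup.closure {x | x ∈ C ∧ G.Homog x} := by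
            apply AddSubgroup.closure_mono
            intro x hx
            exact ⟨le_sSup hJ hx.1, hx.2⟩
    · exact (AddSubgroup.closure_le _).2 (fun x hx => hx.1)
  -- e ∉ C
  have heC : e ∉ C := by
    intro he
    apply hCne
    rw [eq_top_iff]
    intro r _
    have h1 : e * r ∈ C := (hCideal e he r).1
    have h2 : e * r - r ∈ C := (heU r).1
    have : e * r - (e * r - r) ∈ C := C.sub_mem h1 h2
    simpa using this
  -- Zorn: maximal ideal J ⊇ C with e ∉ J
  set 𝒮 : Set (AddSubgroup R) := {K | IsTwoSidedIdeal' K ∧ C ≤ K ∧ e ∉ K} with h𝒮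
  obtain ⟨J, hCJ, hJ𝒮, hJmax⟩ : ∃ J, C ≤ J ∧ Maximal (· ∈ 𝒮) J := by
    apply zorn_le_nonempty₀ 𝒮 ?_ C ⟨hCideal, le_refl _, heC⟩
    intro c hc hchain y hy
    refine ⟨sSup c, ⟨?_, ?_, ?_⟩, fun z hz => le_sSup hz⟩
    · intro x hx r
      have : sSup c ≤ mulMemSub (sSup c) r := by
        refine sSup_le (fun K hK => fun z hz =>
          ⟨le_sSup hK ((hc hK).1 z hz r).2, le_sSup hK ((hc hK).1 z hz r).1⟩)
      exact ⟨(this hx).2, (this hx).1⟩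
    · exact le_trans ((hc hy).2.1) (le_sSup hy)
    · intro he
      rw [AddSubgroup.mem_sSup_of_directedOn ⟨y, hy⟩ hchain.directedOn] at he
      obtain ⟨K, hK, heK⟩ := he
      exact (hc hK).2.2 heK
  obtain ⟨hJideal, hCleJ, heJ⟩ := hJ𝒮
  have hJne : J ≠ ⊤ := fun h => heJ (h ▸ AddSubgroup.mem_top e)
  -- R/J is simple with identity, so a ∈ J
  have haJ : a ∈ J := by
    refine haBM.2 J ⟨le_top, fun x hx r _ => hJideal x hx r⟩ hJne
      ⟨e, AddSubgroup.mem_top e, fun b _ => ⟨hCleJ (heU b).1, hCleJ (heU b).2⟩⟩ ?_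
    intro K hK hJK _
    by_cases hKJ : K = J
    · exact Or.inl hKJ
    have heK : e ∈ K := by
      by_contra heK
      exact hKJ (le_antisymm (hJmax ⟨fun x hx r => hK.2 x hx r (AddSubgroup.mem_top r),
        le_trans hCleJ hJK, heK⟩ hJK) hJK)
    refine Or.inr (eq_top_iff.2 (fun r _ => ?_))
    have h1 : e * r ∈ K := (hK.2 e heK r (AddSubgroup.mem_top r)).1
    have h2 : e * r - r ∈ K := hJK (hCleJ (heU r).1)
    simpa using K.sub_mem h1 h2
  -- P: subgroup generated by homogeneous elements of J
  set P : AddSubgroup R := AddSubgroup.closure {x | x ∈ J ∧ G.Homog x} with hP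
  have hPJ : P ≤ J := (AddSubgroup.closure_le _).2 (fun x hx => hx.1)
  have haP : a ∈ P := AddSubgroup.subset_closure ⟨haJ, haHom⟩
  have hCP : C ≤ P := by
    rw [hCHomSub]
    exact AddSubgroup.closure_mono (fun x hx => ⟨hCleJ hx.1, hx.2⟩)
  -- P is a two-sided ideal
  have hPideal : IsTwoSidedIdeal' P := by
    -- first for homogeneous generators against homogeneous r
    have key : ∀ x, x ∈ J → G.Homog x → ∀ r : R, x * r ∈ P ∧ r * x ∈ P := by
      intro x hxJ hxH r
      have hcomp : ∀ s : S, G.component s ≤ mulMemSub P x := by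
        intro s r' hr'
        obtain ⟨t, hxt⟩ := hxH
        constructor
        · by_cases h0 : x * r' = 0
          · rw [h0]; exact P.zero_mem
          · obtain ⟨u, hu⟩ := G.mul_cond t s ⟨x, hxt, r', hr', h0⟩
            exact AddSubgroup.subset_closure ⟨(hJideal x hxJ r').1, u, hu x hxt r' hr'⟩
        · by_cases h0 : r' * x = 0
          · rw [h0]; exact P.zero_mem
          · obtain ⟨u, hu⟩ := G.mul_cond s t ⟨r', hr', x, hxt, h0⟩
            exact AddSubgroup.subset_closure ⟨(hJideal x hxJ r').2, u, hu r' hr' x hxt⟩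
      have : (⊤ : AddSubgroup R) ≤ mulMemSub P x := by
        rw [← G.iSup_eq_top]
        exact iSup_le hcomp
      exact this (AddSubgroup.mem_top r)
    intro x hx r
    have : P ≤ mulMemSub P r := by
      rw [hP]
      refine (AddSubgroup.closure_le _).2 (fun y hy => ?_)
      exact ⟨(key y hy.1 hy.2 r).2, (key y hy.1 hy.2 r).1⟩
    exact ⟨(this hx).2, (this hx).1⟩
  -- P is homogeneous
  have hPHom : G.IsHomIdeal P := by
    refine ⟨hPideal, le_antisymm ?_ ((AddSubgroup.closure_le _).2 (fun x hx => hx.1))⟩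
    exact AddSubgroup.closure_mono (fun x hx => ⟨AddSubgroup.subset_closure hx, hx.2⟩)
  -- graded simplicity: P = C or ⊤
  rcases hsimp P hPHom hCP with h | h
  · exact hCle (h ▸ haP)
  · exact absurd (eq_top_iff.2 (h ▸ hPJ)) hJne
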